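/- Over any ring, every ℵ₁-projective module is Mittag-Leffler. -/

import Mathlib

open MulOpposite

section CTensor
variable (R : Type) [Ring R]
variable (N : Type) [AddCommGroup N] [Module Rᵐᵒᵖ N]
variable (M : Type) [AddCommGroup M] [Module R M]

def tensorRels : AddSubgroup (FreeAbelianGroup (N × M)) :=
  AddSubgroup.closure
    {x | (∃ n n' m, x = FreeAbelianGroup.of (n + n', m) - FreeAbelianGroup.of (n, m) -
            FreeAbelianGroup.of (n', m)) ∨
         (∃ n m m', x = FreeAbelianGroup.of (n, m + m') - FreeAbelianGroup.of (n, m) -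
            FreeAbelianGroup.of (n, m')) ∨
         (∃ (r : R) (n : N) (m : M), x = FreeAbelianGroup.of (op r • n, m) -
            FreeAbelianGroup.of (n, r • m))}

abbrev CTensor : Type := FreeAbelianGroup (N × M) ⧸ tensorRels R N M

def ctmul (n : N) (m : M) : CTensor R N M :=
  QuotientAddGroup.mk (FreeAbelianGroup.of (n, m))

variable {R N M}

theorem ctmul_add_left (n n' : N) (m : M) :
    ctmul R N M (n + n') m = ctmul R N M n m + ctmul R N M n' m := by
  rw [eq_comm, ← sub_eq_zero]
  show QuotientAddGroup.mk _ + QuotientAddGroup.mk _ - QuotientAddGroup.mk _ = (0 : CTensor R N M)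
  rw [← QuotientAddGroup.mk_add, ← QuotientAddGroup.mk_sub, QuotientAddGroup.eq_zero_iff]
  have h : FreeAbelianGroup.of (n, m) + FreeAbelianGroup.of (n', m) -
      FreeAbelianGroup.of (n + n', m) =
      -(FreeAbelianGroup.of (n + n', m) - FreeAbelianGroup.of (n, m) -
        FreeAbelianGroup.of (n', m)) := by abel
  rw [h]
  exact neg_mem (AddSubgroup.subset_closure (Or.inl ⟨n, n', m, rfl⟩))

theorem ctmul_add_right (n : N) (m m' : M) :
    ctmul R N M n (m + m') = ctmul R N M n m + ctmul R N M n m' := by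
  rw [eq_comm, ← sub_eq_zero]
  show QuotientAddGroup.mk _ + QuotientAddGroup.mk _ - QuotientAddGroup.mk _ = (0 : CTensor R N M)
  rw [← QuotientAddGroup.mk_add, ← QuotientAddGroup.mk_sub, QuotientAddGroup.eq_zero_iff]
  have h : FreeAbelianGroup.of (n, m) + FreeAbelianGroup.of (n, m') -
      FreeAbelianGroup.of (n, m + m') =
      -(FreeAbelianGroup.of (n, m + m') - FreeAbelianGroup.of (n, m) -
        FreeAbelianGroup.of (n, m')) := by abel
  rw [h]
  exact neg_mem (AddSubgroup.subset_closure (Or.inr (Or.inl ⟨n, m, m', rfl⟩)))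

theorem ctmul_smul (r : R) (n : N) (m : M) :
    ctmul R N M (op r • n) m = ctmul R N M n (r • m) := by
  rw [← sub_eq_zero]
  show QuotientAddGroup.mk _ - QuotientAddGroup.mk _ = (0 : CTensor R N M)
  rw [← QuotientAddGroup.mk_sub, QuotientAddGroup.eq_zero_iff]
  apply AddSubgroup.subset_closure
  right; right
  exact ⟨r, n, m, rfl⟩

variable (R N M)

/-- Universal property: lift a balanced biadditive map to the balanced tensor product. -/
def ctlift {A : Type} [AddCommGroup A] (f : N → M → A)
    (h1 : ∀ n n' m, f (n + n') m = f n m + f n' m)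
    (h2 : ∀ n m m', f n (m + m') = f n m + f n m')
    (h3 : ∀ (r : R) n m, f (op r • n) m = f n (r • m)) :
    CTensor R N M →+ A :=
  QuotientAddGroup.lift _ (FreeAbelianGroup.lift fun p => f p.1 p.2) (by
    rw [tensorRels, AddSubgroup.closure_le]
    rintro x (⟨n, n', m, rfl⟩ | ⟨n, m, m', rfl⟩ | ⟨r, n, m, rfl⟩) <;>
      simp [AddMonoidHom.mem_ker, FreeAbelianGroup.lift_apply_of, h1, h2, h3])

@[simp] theorem ctlift_ctmul {A : Type} [AddCommGroup A] (f : N → M → A) (h1) (h2) (h3)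
    (n : N) (m : M) : ctlift R N M f h1 h2 h3 (ctmul R N M n m) = f n m := by
  simp [ctlift, ctmul, QuotientAddGroup.lift_mk, FreeAbelianGroup.lift_apply_of]

end CTensor

section Maps
variable (R : Type) [Ring R]

/-- Functoriality of the balanced tensor product in the right-module variable. -/
def ctmapLeft {N N' : Type} [AddCommGroup N] [Module Rᵐᵒᵖ N] [AddCommGroup N']
    [Module Rᵐᵒᵖ N'] (f : N →ₗ[Rᵐᵒᵖ] N') (M : Type) [AddCommGroup M] [Module R M] :
    CTensor R N M →+ CTensor R N' M :=
  ctlift R N M (fun n m => ctmul R N' M (f n) m)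
    (fun n n' m => by rw [map_add, ctmul_add_left])
    (fun n m m' => by rw [ctmul_add_right])
    (fun r n m => by rw [map_smul, ctmul_smul])

/-- Functoriality of the balanced tensor product in the left-module variable. -/
def ctmapRight (N : Type) [AddCommGroup N] [Module Rᵐᵒᵖ N] {M M' : Type} [AddCommGroup M]
    [Module R M] [AddCommGroup M'] [Module R M'] (f : M →ₗ[R] M') :
    CTensor R N M →+ CTensor R N M' :=
  ctlift R N M (fun n m => ctmul R N M' n (f m))
    (fun n n' m => by rw [ctmul_add_left])
    (fun n m m' => by rw [map_add, ctmul_add_right])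
    (fun r n m => by rw [ctmul_smul, map_smul])

/-- The canonical map `(∏ i, N i) ⊗ M → ∏ i, (N i ⊗ M)`. -/
def ctCanonical {ι : Type} (N : ι → Type) [∀ i, AddCommGroup (N i)]
    [∀ i, Module Rᵐᵒᵖ (N i)] (M : Type) [AddCommGroup M] [Module R M] :
    CTensor R (∀ i, N i) M →+ ∀ i, CTensor R (N i) M :=
  ctlift R (∀ i, N i) M (fun n m i => ctmul R (N i) M (n i) m)
    (fun n n' m => by funext i; exact ctmul_add_left _ _ _)
    (fun n m m' => by funext i; exact ctmul_add_right _ _ _)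
    (fun r n m => by funext i; exact ctmul_smul _ _ _)

end Maps

/-- A submodule is countably generated if it is the span of a countable set. -/
def CountablyGenerated (R : Type) {M : Type} [Ring R] [AddCommGroup M] [Module R M]
    (A : Submodule R M) : Prop :=
  ∃ S : Set M, S.Countable ∧ Submodule.span R S = A

/-- A left `R`-module `M` is Mittag-Leffler if for every family `(Nᵢ)` of right `R`-modules the
canonical map `(∏ i, Nᵢ) ⊗_R M → ∏ i, (Nᵢ ⊗_R M)` is injective. -/
def IsMittagLeffler (R : Type) [Ring R] (M : Type) [AddCommGroup M] [Module R M] : Prop :=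
  ∀ (ι : Type) (N : ι → ModuleCat Rᵐᵒᵖ),
    Function.Injective (ctCanonical R (fun i => ↥(N i)) M)
section MLProof

open FreeAbelianGroup

variable {R M : Type} [Ring R] [AddCommGroup M] [Module R M]

/-- basis-injective maps induce injective maps of free abelian groups -/
theorem freeAbelianGroup_map_injective {α β : Type} [Nonempty α] {f : α → β}
    (hf : Function.Injective f) : Function.Injective (FreeAbelianGroup.map f) := by
  set g := Function.invFun f with hg
  have hgf : ∀ x, g (f x) = x := Function.leftInverse_invFun hf
  have key : ∀ z : FreeAbelianGroup α, FreeAbelianGroup.map g (FreeAbelianGroup.map f z) = z := by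
    intro z
    refine FreeAbelianGroup.induction_on z ?_ ?_ ?_ ?_
    · simp
    · intro x
      rw [FreeAbelianGroup.map_of_apply, FreeAbelianGroup.map_of_apply, hgf]
    · intro x hx
      rw [map_neg, map_neg, hx]
    · intro x y hx hy
      rw [map_add, map_add, hx, hy]
  intro a b hab
  rw [← key a, ← key b, hab]

variable (R)

/-- The set of tensor-relation generators of `FreeAbelianGroup (N × M)` all of whose
`M`-components lie in the submodule `A`. -/
def patt (N : Type) [AddCommGroup N] [Module Rᵐᵒᵖ N] (A : Submodule R M) :
    Set (FreeAbelianGroup (N × M)) :=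
  {x | (∃ n n' a, a ∈ A ∧ x = FreeAbelianGroup.of (n + n', a) - FreeAbelianGroup.of (n, a) -
          FreeAbelianGroup.of (n', a)) ∨
       (∃ n a b, a ∈ A ∧ b ∈ A ∧ x = FreeAbelianGroup.of (n, a + b) -
          FreeAbelianGroup.of (n, a) - FreeAbelianGroup.of (n, b)) ∨
       (∃ (r : R) (n : N) (a : M), a ∈ A ∧ x = FreeAbelianGroup.of (op r • n, a) -
          FreeAbelianGroup.of (n, r • a))}

/-- The relation subgroup supported in a submodule `A`. -/
def pattT (N : Type) [AddCommGroup N] [Module Rᵐᵒᵖ N] (A : Submodule R M) :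
    AddSubgroup (FreeAbelianGroup (N × M)) :=
  AddSubgroup.closure (patt R N A)

variable {R}

theorem pattT_mono {N : Type} [AddCommGroup N] [Module Rᵐᵒᵖ N] {A B : Submodule R M}
    (hAB : A ≤ B) : pattT R N A ≤ pattT R N B := by
  apply AddSubgroup.closure_mono
  rintro x (⟨n, n', a, ha, rfl⟩ | ⟨n, a, b, ha, hb, rfl⟩ | ⟨r, n, a, ha, rfl⟩)
  · exact Or.inl ⟨n, n', a, hAB ha, rfl⟩
  · exact Or.inr (Or.inl ⟨n, a, b, hAB ha, hAB hb, rfl⟩)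
  · exact Or.inr (Or.inr ⟨r, n, a, hAB ha, rfl⟩)

theorem pattT_top (N : Type) [AddCommGroup N] [Module Rᵐᵒᵖ N] :
    pattT R N (⊤ : Submodule R M) = tensorRels R N M := by
  unfold pattT tensorRels
  congr 1
  ext x
  constructor
  · rintro (⟨n, n', a, _, rfl⟩ | ⟨n, a, b, _, _, rfl⟩ | ⟨r, n, a, _, rfl⟩)
    · exact Or.inl ⟨n, n', a, rfl⟩
    · exact Or.inr (Or.inl ⟨n, a, b, rfl⟩)
    · exact Or.inr (Or.inr ⟨r, n, a, rfl⟩)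
  · rintro (⟨n, n', a, rfl⟩ | ⟨n, a, b, rfl⟩ | ⟨r, n, a, rfl⟩)
    · exact Or.inl ⟨n, n', a, trivial, rfl⟩
    · exact Or.inr (Or.inl ⟨n, a, b, trivial, trivial, rfl⟩)
    · exact Or.inr (Or.inr ⟨r, n, a, trivial, rfl⟩)

variable (R)

/-- The embedding of free abelian groups induced by `A ≤ M`. -/
def embA (N : Type) [AddCommGroup N] [Module Rᵐᵒᵖ N] (A : Submodule R M) :
    FreeAbelianGroup (N × ↥A) →+ FreeAbelianGroup (N × M) :=
  FreeAbelianGroup.map (Prod.map id Subtype.val)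

variable {R}

theorem embA_injective (N : Type) [AddCommGroup N] [Module Rᵐᵒᵖ N] (A : Submodule R M) :
    Function.Injective (embA R N A) :=
  freeAbelianGroup_map_injective
    (Function.Injective.prodMap Function.injective_id Subtype.val_injective)

theorem embA_of (N : Type) [AddCommGroup N] [Module Rᵐᵒᵖ N] (A : Submodule R M)
    (n : N) (a : ↥A) :
    embA R N A (FreeAbelianGroup.of (n, a)) = FreeAbelianGroup.of (n, (a : M)) :=
  FreeAbelianGroup.map_of_apply _

theorem map_tensorRels_eq (N : Type) [AddCommGroup N] [Module Rᵐᵒᵖ N] (A : Submodule R M) :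
    (tensorRels R N ↥A).map (embA R N A) = pattT R N A := by
  unfold tensorRels pattT
  rw [AddMonoidHom.map_closure]
  congr 1
  ext x
  simp only [Set.mem_image, Set.mem_setOf_eq]
  constructor
  · rintro ⟨y, (⟨n, n', a, rfl⟩ | ⟨n, a, b, rfl⟩ | ⟨r, n, a, rfl⟩), rfl⟩
    · refine Or.inl ⟨n, n', (a : M), a.2, ?_⟩
      simp only [map_sub, embA_of]
    · refine Or.inr (Or.inl ⟨n, (a : M), (b : M), a.2, b.2, ?_⟩)
      simp only [map_sub, embA_of, Submodule.coe_add]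
    · refine Or.inr (Or.inr ⟨r, n, (a : M), a.2, ?_⟩)
      simp only [map_sub, embA_of, Submodule.coe_smul]
  · rintro (⟨n, n', a, ha, rfl⟩ | ⟨n, a, b, ha, hb, rfl⟩ | ⟨r, n, a, ha, rfl⟩)
    · use FreeAbelianGroup.of (n + n', ⟨a, ha⟩) - FreeAbelianGroup.of (n, ⟨a, ha⟩) -
        FreeAbelianGroup.of (n', (⟨a, ha⟩ : ↥A))
      constructor
      · exact Or.inl ⟨n, n', ⟨a, ha⟩, rfl⟩
      · simp only [map_sub, embA_of]
    · use FreeAbelianGroup.of (n, ⟨a, ha⟩ + ⟨b, hb⟩) - FreeAbelianGroup.of (n, ⟨a, ha⟩) -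
        FreeAbelianGroup.of (n, (⟨b, hb⟩ : ↥A))
      constructor
      · exact Or.inr (Or.inl ⟨n, ⟨a, ha⟩, ⟨b, hb⟩, rfl⟩)
      · simp only [map_sub, embA_of, Submodule.coe_add]
    · use FreeAbelianGroup.of (op r • n, ⟨a, ha⟩) - FreeAbelianGroup.of (n, r • (⟨a, ha⟩ : ↥A))
      constructor
      · exact Or.inr (Or.inr ⟨r, n, ⟨a, ha⟩, rfl⟩)
      · simp only [map_sub, embA_of, Submodule.coe_smul]
theorem mem_pattT_iff_mk_eq_zero (N : Type) [AddCommGroup N] [Module Rᵐᵒᵖ N]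
    (A : Submodule R M) (z : FreeAbelianGroup (N × ↥A)) :
    (QuotientAddGroup.mk z : CTensor R N ↥A) = 0 ↔ embA R N A z ∈ pattT R N A := by
  rw [QuotientAddGroup.eq_zero_iff, ← map_tensorRels_eq]
  constructor
  · intro hz
    exact AddSubgroup.mem_map_of_mem _ hz
  · rintro hz
    rcases (AddSubgroup.mem_map).1 hz with ⟨w, hw, he⟩
    rwa [← embA_injective N A he]

variable (R) in
/-- `Dies mv ν A` : the element `∑ ν k ⊗ mv k` is killed by the relations supported in `A`. -/
def Dies {κ : Type} [Fintype κ] (mv : κ → M) (N : Type) [AddCommGroup N] [Module Rᵐᵒᵖ N]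
    (ν : κ → N) (A : Submodule R M) : Prop :=
  (∑ k, FreeAbelianGroup.of (ν k, mv k)) ∈ pattT R N A

theorem Dies.mono {κ : Type} [Fintype κ] {mv : κ → M} {N : Type} [AddCommGroup N]
    [Module Rᵐᵒᵖ N] {ν : κ → N} {A B : Submodule R M} (hAB : A ≤ B)
    (hd : Dies R mv N ν A) : Dies R mv N ν B :=
  pattT_mono hAB hd

theorem dies_iff_sum_ctmul_eq_zero {κ : Type} [Fintype κ] {mv : κ → M} {N : Type}
    [AddCommGroup N] [Module Rᵐᵒᵖ N] (ν : κ → N) (A : Submodule R M) (hm : ∀ k, mv k ∈ A) :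
    Dies R mv N ν A ↔ ∑ k, ctmul R N ↥A (ν k) ⟨mv k, hm k⟩ = 0 := by
  have h1 : ∑ k, ctmul R N ↥A (ν k) ⟨mv k, hm k⟩ =
      (QuotientAddGroup.mk (∑ k, FreeAbelianGroup.of (ν k, (⟨mv k, hm k⟩ : ↥A))) :
        CTensor R N ↥A) := by
    rw [← QuotientAddGroup.mk'_apply, map_sum]
    rfl
  rw [h1, mem_pattT_iff_mk_eq_zero, map_sum]
  unfold Dies
  have h2 : ∀ k, embA R N A (FreeAbelianGroup.of (ν k, (⟨mv k, hm k⟩ : ↥A))) =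
      FreeAbelianGroup.of (ν k, mv k) := fun k => embA_of N A _ _
  rw [Finset.sum_congr rfl fun k _ => h2 k]

theorem diesTop_iff_sum_ctmul_eq_zero {κ : Type} [Fintype κ] {mv : κ → M} {N : Type}
    [AddCommGroup N] [Module Rᵐᵒᵖ N] (ν : κ → N) :
    Dies R mv N ν (⊤ : Submodule R M) ↔ ∑ k, ctmul R N M (ν k) (mv k) = 0 := by
  have h1 : ∑ k, ctmul R N M (ν k) (mv k) =
      (QuotientAddGroup.mk (∑ k, FreeAbelianGroup.of (ν k, mv k)) : CTensor R N M) := by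
    rw [← QuotientAddGroup.mk'_apply, map_sum]
    rfl
  rw [h1, QuotientAddGroup.eq_zero_iff]
  unfold Dies
  rw [pattT_top]

theorem pattT_descend {N : Type} [AddCommGroup N]
    [Module Rᵐᵒᵖ N] {z : FreeAbelianGroup (N × M)} (hd : z ∈ pattT R N (⊤ : Submodule R M)) :
    ∃ F : Finset M, z ∈ pattT R N (Submodule.span R (F : Set M)) := by
  classical
  unfold pattT at hd ⊢
  induction hd using AddSubgroup.closure_induction with
  | mem x hx =>
    rcases hx with ⟨n, n', a, _, rfl⟩ | ⟨n, a, b, _, _, rfl⟩ | ⟨r, n, a, _, rfl⟩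
    · exact ⟨{a}, AddSubgroup.subset_closure (Or.inl ⟨n, n', a,
        Submodule.subset_span (by simp), rfl⟩)⟩
    · refine ⟨{a, b}, AddSubgroup.subset_closure (Or.inr (Or.inl ⟨n, a, b,
        Submodule.subset_span (by simp), Submodule.subset_span (by simp), rfl⟩))⟩
    · exact ⟨{a}, AddSubgroup.subset_closure (Or.inr (Or.inr ⟨r, n, a,
        Submodule.subset_span (by simp), rfl⟩))⟩
  | zero => exact ⟨∅, zero_mem _⟩
  | add x y _ _ ihx ihy =>
    rcases ihx with ⟨F₁, h₁⟩
    rcases ihy with ⟨F₂, h₂⟩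
    refine ⟨F₁ ∪ F₂, add_mem (pattT_mono (Submodule.span_mono ?_) h₁)
      (pattT_mono (Submodule.span_mono ?_) h₂)⟩
    · rw [Finset.coe_union]; exact Set.subset_union_left
    · rw [Finset.coe_union]; exact Set.subset_union_right
  | neg x _ ihx =>
    rcases ihx with ⟨F, h₁⟩
    exact ⟨F, neg_mem h₁⟩

theorem pattT_of_iSup_chain {N : Type} [AddCommGroup N]
    [Module Rᵐᵒᵖ N] (A : ℕ →o Submodule R M) {z : FreeAbelianGroup (N × M)}
    (hd : z ∈ pattT R N (⨆ s, A s)) : ∃ s, z ∈ pattT R N (A s) := by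
  unfold pattT at hd ⊢
  induction hd using AddSubgroup.closure_induction with
  | mem x hx =>
    rcases hx with ⟨n, n', a, ha, rfl⟩ | ⟨n, a, b, ha, hb, rfl⟩ | ⟨r, n, a, ha, rfl⟩
    · rcases (Submodule.mem_iSup_of_chain A a).1 ha with ⟨s, hs⟩
      exact ⟨s, AddSubgroup.subset_closure (Or.inl ⟨n, n', a, hs, rfl⟩)⟩
    · rcases (Submodule.mem_iSup_of_chain A a).1 ha with ⟨s₁, hs₁⟩
      rcases (Submodule.mem_iSup_of_chain A b).1 hb with ⟨s₂, hs₂⟩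
      exact ⟨max s₁ s₂, AddSubgroup.subset_closure (Or.inr (Or.inl ⟨n, a, b,
        A.monotone (le_max_left s₁ s₂) hs₁, A.monotone (le_max_right s₁ s₂) hs₂, rfl⟩))⟩
    · rcases (Submodule.mem_iSup_of_chain A a).1 ha with ⟨s, hs⟩
      exact ⟨s, AddSubgroup.subset_closure (Or.inr (Or.inr ⟨r, n, a, hs, rfl⟩))⟩
  | zero => exact ⟨0, zero_mem _⟩
  | add x y _ _ ihx ihy =>
    rcases ihx with ⟨s₁, h₁⟩
    rcases ihy with ⟨s₂, h₂⟩
    exact ⟨max s₁ s₂, add_mem (pattT_mono (A.monotone (le_max_left s₁ s₂)) h₁)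
      (pattT_mono (A.monotone (le_max_right s₁ s₂)) h₂)⟩
  | neg x _ ihx =>
    rcases ihx with ⟨s, h₁⟩
    exact ⟨s, neg_mem h₁⟩

theorem Dies.descend {κ : Type} [Fintype κ] {mv : κ → M} {N : Type} [AddCommGroup N]
    [Module Rᵐᵒᵖ N] {ν : κ → N} (hd : Dies R mv N ν (⊤ : Submodule R M)) :
    ∃ F : Finset M, Dies R mv N ν (Submodule.span R (F : Set M)) :=
  pattT_descend hd

theorem Dies.of_iSup_chain {κ : Type} [Fintype κ] {mv : κ → M} {N : Type} [AddCommGroup N]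
    [Module Rᵐᵒᵖ N] {ν : κ → N} (A : ℕ →o Submodule R M)
    (hd : Dies R mv N ν (⨆ s, A s)) : ∃ s, Dies R mv N ν (A s) :=
  pattT_of_iSup_chain A hd

end MLProof
section Helpers

variable (R : Type) [Ring R] (N : Type) [AddCommGroup N] [Module Rᵐᵒᵖ N]
  (P : Type) [AddCommGroup P] [Module R P]

/-- `ctmul` as an additive hom in the first argument. -/
def ctmulLhom (mm : P) : N →+ CTensor R N P :=
  AddMonoidHom.mk' (fun n => ctmul R N P n mm) (fun n n' => ctmul_add_left n n' mm)

/-- `ctmul` as an additive hom in the second argument. -/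
def ctmulRhom (n : N) : P →+ CTensor R N P :=
  AddMonoidHom.mk' (fun mm => ctmul R N P n mm) (fun m1 m2 => ctmul_add_right n m1 m2)

@[simp] theorem ctmulLhom_apply (mm : P) (n : N) : ctmulLhom R N P mm n = ctmul R N P n mm := rfl

@[simp] theorem ctmulRhom_apply (n : N) (mm : P) : ctmulRhom R N P n mm = ctmul R N P n mm := rfl

theorem ctmul_zero_left (mm : P) : ctmul R N P 0 mm = 0 := by
  rw [← ctmulLhom_apply, map_zero]

theorem ctmul_neg_left (n : N) (mm : P) : ctmul R N P (-n) mm = - ctmul R N P n mm := by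
  rw [← ctmulLhom_apply, map_neg, ctmulLhom_apply]

theorem ctmul_sum_left {κ : Type} (S : Finset κ) (f : κ → N) (mm : P) :
    ctmul R N P (∑ k ∈ S, f k) mm = ∑ k ∈ S, ctmul R N P (f k) mm := by
  rw [← ctmulLhom_apply, map_sum]
  rfl

theorem ctmul_sum_right {κ : Type} (S : Finset κ) (n : N) (f : κ → P) :
    ctmul R N P n (∑ k ∈ S, f k) = ∑ k ∈ S, ctmul R N P n (f k) := by
  rw [← ctmulRhom_apply, map_sum]
  rfl

@[simp] theorem ctmapLeft_ctmul {N' : Type} [AddCommGroup N'] [Module Rᵐᵒᵖ N']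
    (f : N →ₗ[Rᵐᵒᵖ] N') (n : N) (mm : P) :
    ctmapLeft R f P (ctmul R N P n mm) = ctmul R N' P (f n) mm := by
  unfold ctmapLeft
  rw [ctlift_ctmul]

@[simp] theorem ctmapRight_ctmul {P' : Type} [AddCommGroup P'] [Module R P']
    (f : P →ₗ[R] P') (n : N) (mm : P) :
    ctmapRight R N f (ctmul R N P n mm) = ctmul R N P' n (f mm) := by
  unfold ctmapRight
  rw [ctlift_ctmul]

@[simp] theorem ctCanonical_ctmul {ι : Type} (Nf : ι → Type) [∀ i, AddCommGroup (Nf i)]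
    [∀ i, Module Rᵐᵒᵖ (Nf i)] (q : ∀ i, Nf i) (mm : P) :
    ctCanonical R Nf P (ctmul R (∀ i, Nf i) P q mm) = fun i => ctmul R (Nf i) P (q i) mm := by
  unfold ctCanonical
  rw [ctlift_ctmul]

/-- Every element of the balanced tensor product is a finite sum of pure tensors. -/
theorem ctensor_exists_repr (x : CTensor R N P) :
    ∃ (κ : Type) (_ : Fintype κ) (_ : DecidableEq κ) (q : κ → N) (mv : κ → P),
      x = ∑ k, ctmul R N P (q k) (mv k) := by
  refine QuotientAddGroup.induction_on x ?_
  intro z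
  refine FreeAbelianGroup.induction_on (motive := fun z => ∃ (κ : Type) (_ : Fintype κ)
    (_ : DecidableEq κ) (q : κ → N) (mv : κ → P),
    (QuotientAddGroup.mk z : CTensor R N P) = ∑ k, ctmul R N P (q k) (mv k)) z ?_ ?_ ?_ ?_
  · refine ⟨PEmpty, inferInstance, inferInstance, PEmpty.elim, PEmpty.elim, ?_⟩
    simp
  · intro p
    refine ⟨PUnit, inferInstance, inferInstance, fun _ => p.1, fun _ => p.2, ?_⟩
    simp
    rfl
  · rintro p -
    refine ⟨PUnit, inferInstance, inferInstance, fun _ => -p.1, fun _ => p.2, ?_⟩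
    have h1 : (QuotientAddGroup.mk (-FreeAbelianGroup.of p) : CTensor R N P) =
        - ctmul R N P p.1 p.2 := rfl
    rw [h1, ← ctmul_neg_left]
    simp
  · rintro z w ⟨κ₁, hf₁, hd₁, q₁, m₁, h₁⟩ ⟨κ₂, hf₂, hd₂, q₂, m₂, h₂⟩
    refine ⟨κ₁ ⊕ κ₂, inferInstance, inferInstance, Sum.elim q₁ q₂, Sum.elim m₁ m₂, ?_⟩
    have h0 : (QuotientAddGroup.mk (z + w) : CTensor R N P) =
        QuotientAddGroup.mk z + QuotientAddGroup.mk w := rfl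
    rw [h0, h₁, h₂, Fintype.sum_sum_type]
    simp

end Helpers
section DualBasis

variable {R M : Type} [Ring R] [AddCommGroup M] [Module R M]
variable {κ : Type} [Fintype κ] [DecidableEq κ] (mv : κ → M)
variable (A : Submodule R M) (hm : ∀ k, mv k ∈ A)
variable (s : ↥A →ₗ[R] (↥A →₀ R))

/-- The common finite "support" of the images of the `mv k` under a dual basis. -/
noncomputable def dbSupp : Finset ↥A :=
  letI := Classical.decEq ↥A
  Finset.biUnion Finset.univ (fun k => (s ⟨mv k, hm k⟩).support)

theorem support_subset_dbSupp (k : κ) : (s ⟨mv k, hm k⟩).support ⊆ dbSupp mv A hm s := by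
  intro x hx
  unfold dbSupp
  letI := Classical.decEq ↥A
  exact Finset.mem_biUnion.mpr ⟨k, Finset.mem_univ k, hx⟩

theorem dual_repr (hs : Function.LeftInverse (Finsupp.linearCombination R (id : ↥A → ↥A)) s)
    (k : κ) :
    (⟨mv k, hm k⟩ : ↥A) = ∑ y ∈ dbSupp mv A hm s, (s ⟨mv k, hm k⟩) y • y := by
  conv_lhs => rw [← hs ⟨mv k, hm k⟩]
  rw [Finsupp.linearCombination_apply]
  exact Finsupp.sum_of_support_subset _ (support_subset_dbSupp mv A hm s k) _ (by simp)

theorem dual_sum (hs : Function.LeftInverse (Finsupp.linearCombination R (id : ↥A → ↥A)) s)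
    (W : Type) [AddCommGroup W] [Module Rᵐᵒᵖ W] (w : κ → W) :
    ∑ k, ctmul R W ↥A (w k) ⟨mv k, hm k⟩ =
      ∑ y ∈ dbSupp mv A hm s, ctmul R W ↥A (∑ k, op ((s ⟨mv k, hm k⟩) y) • w k) y := by
  have step1 : ∀ k, ctmul R W ↥A (w k) ⟨mv k, hm k⟩ =
      ∑ y ∈ dbSupp mv A hm s, ctmul R W ↥A (op ((s ⟨mv k, hm k⟩) y) • w k) y := by
    intro k
    conv_lhs => rw [dual_repr mv A hm s hs k]
    rw [ctmul_sum_right]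
    exact Finset.sum_congr rfl fun y _ => (ctmul_smul _ _ _).symm
  rw [Finset.sum_congr rfl fun k _ => step1 k, Finset.sum_comm]
  exact Finset.sum_congr rfl fun y _ => (ctmul_sum_left R W ↥A _ _ _).symm

theorem sum_op_smul_eq_zero_of_ctzero (N : Type) [AddCommGroup N] [Module Rᵐᵒᵖ N]
    (ν : κ → N) (h0 : ∑ k, ctmul R N ↥A (ν k) ⟨mv k, hm k⟩ = 0) (f : ↥A →ₗ[R] R) :
    ∑ k, op (f ⟨mv k, hm k⟩) • ν k = 0 := by
  have h1 : ∀ (n n' : N) (a : ↥A), op (f a) • (n + n') = op (f a) • n + op (f a) • n' :=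
    fun n n' a => smul_add _ _ _
  have h2 : ∀ (n : N) (a a' : ↥A), op (f (a + a')) • n = op (f a) • n + op (f a') • n := by
    intro n a a'
    rw [map_add, op_add, add_smul]
  have h3 : ∀ (r : R) (n : N) (a : ↥A), op (f a) • (op r • n) = op (f (r • a)) • n := by
    intro r n a
    rw [map_smul, smul_smul, smul_eq_mul, op_mul]
  have hc := congrArg (ctlift R N ↥A (fun n a => op (f a) • n) h1 h2 h3) h0
  rw [map_sum, map_zero] at hc
  simp only [ctlift_ctmul] at hc
  exact hc

end DualBasis
section Universal

variable {R M : Type} [Ring R] [AddCommGroup M] [Module R M]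
variable {κ : Type} [Fintype κ] [DecidableEq κ] (mv : κ → M)
variable (A : Submodule R M) (hm : ∀ k, mv k ∈ A)

/-- The right submodule of columns coming from functionals on `A`. -/
def colC : Submodule Rᵐᵒᵖ (κ → R) :=
  Submodule.span Rᵐᵒᵖ (Set.range (fun f : ↥A →ₗ[R] R => fun k => f ⟨mv k, hm k⟩))

/-- The universal test right module. -/
abbrev NU : Type := (κ → R) ⧸ colC mv A hm

/-- The canonical tuple in the universal test module. -/
def eU : κ → NU mv A hm := fun k => Submodule.Quotient.mk (Pi.single k 1)

theorem universal_dies (s : ↥A →ₗ[R] (↥A →₀ R))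
    (hs : Function.LeftInverse (Finsupp.linearCombination R (id : ↥A → ↥A)) s) :
    ∑ k, ctmul R (NU mv A hm) ↥A (eU mv A hm k) ⟨mv k, hm k⟩ = 0 := by
  rw [dual_sum mv A hm s hs]
  refine Finset.sum_eq_zero fun y _ => ?_
  have hz : (∑ k, op ((s ⟨mv k, hm k⟩) y) • eU mv A hm k) = 0 := by
    have h1 : (∑ k, op ((s ⟨mv k, hm k⟩) y) • eU mv A hm k) =
        Submodule.Quotient.mk (∑ k, op ((s ⟨mv k, hm k⟩) y) • Pi.single k 1) := by
      rw [← Submodule.mkQ_apply, map_sum]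
      exact Finset.sum_congr rfl fun k _ => by rw [map_smul, Submodule.mkQ_apply]; rfl
    rw [h1, Submodule.Quotient.mk_eq_zero]
    have h2 : (∑ k, op ((s ⟨mv k, hm k⟩) y) • Pi.single k 1 : κ → R) =
        fun k => (((Finsupp.lapply y).comp s) ⟨mv k, hm k⟩ : R) := by
      funext k'
      rw [Finset.sum_apply]
      have h3 : ∀ k, (op ((s ⟨mv k, hm k⟩) y) • (Pi.single k 1 : κ → R)) k' =
          (Pi.single k 1 : κ → R) k' * (s ⟨mv k, hm k⟩) y := fun k => rfl
      rw [Finset.sum_congr rfl fun k _ => h3 k]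
      rw [Finset.sum_eq_single k' (fun b _ hb => by
        rw [Pi.single_eq_of_ne' hb, zero_mul]) (fun hk => absurd (Finset.mem_univ k') hk)]
      rw [Pi.single_eq_same, one_mul]
      rfl
    rw [h2]
    exact Submodule.subset_span ⟨(Finsupp.lapply y).comp s, rfl⟩
  rw [hz, ctmul_zero_left]

theorem transfer_dies (N : Type) [AddCommGroup N] [Module Rᵐᵒᵖ N] (ν : κ → N)
    (hν : ∀ f : ↥A →ₗ[R] R, ∑ k, op (f ⟨mv k, hm k⟩) • ν k = 0)
    (B : Submodule R M) (hmB : ∀ k, mv k ∈ B)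
    (hB : ∑ k, ctmul R (NU mv A hm) ↥B (eU mv A hm k) ⟨mv k, hmB k⟩ = 0) :
    ∑ k, ctmul R N ↥B (ν k) ⟨mv k, hmB k⟩ = 0 := by
  have hg : ∀ (v w : κ → R), (∑ k, op ((v + w) k) • ν k) =
      (∑ k, op (v k) • ν k) + (∑ k, op (w k) • ν k) := by
    intro v w
    rw [← Finset.sum_add_distrib]
    exact Finset.sum_congr rfl fun k _ => by rw [Pi.add_apply, op_add, add_smul]
  have hgs : ∀ (c : Rᵐᵒᵖ) (v : κ → R), (∑ k, op ((c • v) k) • ν k) =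
      c • ∑ k, op (v k) • ν k := by
    intro c v
    rw [Finset.smul_sum]
    refine Finset.sum_congr rfl fun k _ => ?_
    rw [Pi.smul_apply, smul_smul]
    congr 1
  let g : (κ → R) →ₗ[Rᵐᵒᵖ] N :=
    { toFun := fun v => ∑ k, op (v k) • ν k
      map_add' := hg
      map_smul' := hgs }
  have hker : colC mv A hm ≤ LinearMap.ker g := by
    rw [colC, Submodule.span_le]
    rintro _ ⟨f, rfl⟩
    exact hν f
  let glin : NU mv A hm →ₗ[Rᵐᵒᵖ] N := Submodule.liftQ _ g hker
  have hge : ∀ k, glin (eU mv A hm k) = ν k := by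
    intro k
    show g (Pi.single k 1) = ν k
    show (∑ k', op ((Pi.single k 1 : κ → R) k') • ν k') = ν k
    rw [Finset.sum_eq_single k (fun b _ hb => by
      rw [Pi.single_eq_of_ne hb, op_zero, zero_smul]) (fun hk => absurd (Finset.mem_univ k) hk)]
    rw [Pi.single_eq_same, op_one, one_smul]
  have := congrArg (ctmapLeft R glin ↥B) hB
  rw [map_sum, map_zero] at this
  calc ∑ k, ctmul R N ↥B (ν k) ⟨mv k, hmB k⟩
      = ∑ k, ctmapLeft R glin ↥B (ctmul R (NU mv A hm) ↥B (eU mv A hm k) ⟨mv k, hmB k⟩) := by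
        refine Finset.sum_congr rfl fun k _ => ?_
        rw [ctmapLeft_ctmul, hge]
    _ = 0 := this

end Universal

section Stabilize

variable {R M : Type} [Ring R] [AddCommGroup M] [Module R M]
variable {κ : Type} [Fintype κ] [DecidableEq κ] (mv : κ → M)

theorem stabilize (AC : ℕ →o Submodule R M) (hm0 : ∀ k, mv k ∈ AC 0)
    (hproj : Module.Projective R ↥(⨆ n, AC n)) :
    ∃ s0 : ℕ, ∀ (N : Type) [AddCommGroup N] [Module Rᵐᵒᵖ N] (ν : κ → N),
      Dies R mv N ν (⨆ n, AC n) → Dies R mv N ν (AC s0) := by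
  have hmω : ∀ k, mv k ∈ (⨆ n, AC n) := fun k => (le_iSup (fun n => AC n) 0) (hm0 k)
  obtain ⟨sdb, hsdb⟩ := hproj.out
  have hU : Dies R mv (NU mv (⨆ n, AC n) hmω) (eU mv (⨆ n, AC n) hmω) (⨆ n, AC n) :=
    (dies_iff_sum_ctmul_eq_zero _ _ hmω).mpr (universal_dies mv (⨆ n, AC n) hmω sdb hsdb)
  obtain ⟨s0, hs0⟩ := hU.of_iSup_chain AC
  refine ⟨s0, ?_⟩
  intro N _ _ ν hν
  have hmB : ∀ k, mv k ∈ AC s0 := fun k => AC.monotone (Nat.zero_le s0) (hm0 k)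
  have h0 : ∑ k, ctmul R N ↥(⨆ n, AC n) (ν k) ⟨mv k, hmω k⟩ = 0 :=
    (dies_iff_sum_ctmul_eq_zero _ _ hmω).mp hν
  have hfunc : ∀ f : ↥(⨆ n, AC n) →ₗ[R] R, ∑ k, op (f ⟨mv k, hmω k⟩) • ν k = 0 :=
    fun f => sum_op_smul_eq_zero_of_ctzero mv (⨆ n, AC n) hmω N ν h0 f
  have hUB : ∑ k, ctmul R (NU mv (⨆ n, AC n) hmω) ↥(AC s0) (eU mv (⨆ n, AC n) hmω k)
      ⟨mv k, hmB k⟩ = 0 := (dies_iff_sum_ctmul_eq_zero _ _ hmB).mp hs0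
  exact (dies_iff_sum_ctmul_eq_zero _ _ hmB).mpr
    (transfer_dies mv (⨆ n, AC n) hmω N ν hfunc (AC s0) hmB hUB)

end Stabilize
section Good

variable {R M : Type} [Ring R] [AddCommGroup M] [Module R M]
variable {κ : Type} [Fintype κ] [DecidableEq κ]

theorem cg_sup_span_finset {A : Submodule R M} (hA : CountablyGenerated R A) (F : Finset M) :
    CountablyGenerated R (A ⊔ Submodule.span R (F : Set M)) := by
  obtain ⟨S, hS, rfl⟩ := hA
  exact ⟨S ∪ (F : Set M), hS.union F.countable_toSet, by rw [Submodule.span_union]⟩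

theorem cg_iSup_chain (A : ℕ → Submodule R M) (hA : ∀ n, CountablyGenerated R (A n)) :
    CountablyGenerated R (⨆ n, A n) := by
  choose S hS hspan using hA
  refine ⟨⋃ n, S n, Set.countable_iUnion hS, ?_⟩
  rw [Submodule.span_iUnion]
  exact iSup_congr hspan

theorem exists_good (h : ∀ A : Submodule R M, CountablyGenerated R A → Module.Projective R ↥A)
    (mv : κ → M) :
    ∃ A : Submodule R M, CountablyGenerated R A ∧ (∀ k, mv k ∈ A) ∧
      ∀ (N : Type) [AddCommGroup N] [Module Rᵐᵒᵖ N] (ν : κ → N),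
        Dies R mv N ν ⊤ → Dies R mv N ν A := by
  by_contra hcon
  push_neg at hcon
  -- every admissible submodule admits a strictly better "bad" extension
  have key : ∀ p : {B : Submodule R M // CountablyGenerated R B ∧ ∀ k, mv k ∈ B},
      ∃ q : {B : Submodule R M // CountablyGenerated R B ∧ ∀ k, mv k ∈ B},
        p.1 ≤ q.1 ∧ ∃ (N : ModuleCat Rᵐᵒᵖ) (ν : κ → ↥N),
          Dies R mv ↥N ν q.1 ∧ ¬ Dies R mv ↥N ν p.1 := by
    rintro ⟨A, hcg, hmem⟩
    obtain ⟨N, i1, i2, ν, hTop, hnot⟩ := hcon A hcg hmem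
    obtain ⟨F, hF⟩ := hTop.descend
    refine ⟨⟨A ⊔ Submodule.span R (F : Set M), cg_sup_span_finset hcg F,
      fun k => Submodule.mem_sup_left (hmem k)⟩, le_sup_left,
      @ModuleCat.of Rᵐᵒᵖ _ N i1 i2, ν, hF.mono le_sup_right, hnot⟩
  let step := fun p => (key p).choose
  have hstep1 : ∀ p, p.1 ≤ (step p).1 := fun p => (key p).choose_spec.1
  have hstep2 : ∀ p, ∃ (N : ModuleCat Rᵐᵒᵖ) (ν : κ → ↥N),
      Dies R mv ↥N ν (step p).1 ∧ ¬ Dies R mv ↥N ν p.1 := fun p => (key p).choose_spec.2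
  have hA0 : CountablyGenerated R (Submodule.span R (Set.range mv)) ∧
      ∀ k, mv k ∈ Submodule.span R (Set.range mv) :=
    ⟨⟨Set.range mv, (Set.finite_range mv).countable, rfl⟩,
      fun k => Submodule.subset_span (Set.mem_range_self k)⟩
  let chain : ℕ → {B : Submodule R M // CountablyGenerated R B ∧ ∀ k, mv k ∈ B} :=
    fun n => step^[n] ⟨Submodule.span R (Set.range mv), hA0⟩
  have hchain : ∀ n, chain (n + 1) = step (chain n) := fun n =>
    Function.iterate_succ_apply' step n _
  have hmono : Monotone (fun n => (chain n).1) := by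
    apply monotone_nat_of_le_succ
    intro n
    rw [hchain n]
    exact hstep1 (chain n)
  let AC : ℕ →o Submodule R M := ⟨fun n => (chain n).1, hmono⟩
  have hcgω : CountablyGenerated R (⨆ n, AC n) := cg_iSup_chain _ (fun n => (chain n).2.1)
  obtain ⟨s0, hs0⟩ := stabilize mv AC (fun k => (chain 0).2.2 k) (h _ hcgω)
  obtain ⟨N, ν, hd, hnd⟩ := hstep2 (chain s0)
  have h1 : Dies R mv ↥N ν (AC (s0 + 1)) := by
    have : AC (s0 + 1) = (step (chain s0)).1 := congrArg Subtype.val (hchain s0)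
    rw [this]
    exact hd
  exact hnd (hs0 ↥N ν (h1.mono (le_iSup (fun n => AC n) (s0 + 1))))

end Good
/-- Over any ring, every `ℵ₁`-projective module (every countably generated submodule is
projective) is Mittag-Leffler. -/
theorem mittagLeffler_of_aleph1Projective (R M : Type) [Ring R] [AddCommGroup M] [Module R M]
    (h : ∀ A : Submodule R M, CountablyGenerated R A → Module.Projective R ↥A) :
    IsMittagLeffler R M := by
  intro ι Nfam
  rw [injective_iff_map_eq_zero]
  intro x hx
  obtain ⟨κ, hfin, hdec, q, mv, rfl⟩ := ctensor_exists_repr R (∀ i, ↥(Nfam i)) M x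
  -- componentwise vanishing
  have hxi : ∀ i, ∑ k, ctmul R ↥(Nfam i) M (q k i) (mv k) = 0 := by
    intro i
    rw [map_sum] at hx
    have hx' := congrFun hx i
    rw [Finset.sum_apply] at hx'
    calc ∑ k, ctmul R ↥(Nfam i) M (q k i) (mv k)
        = ∑ k, (ctCanonical R (fun i => ↥(Nfam i)) M (ctmul R (∀ i, ↥(Nfam i)) M
            (q k) (mv k))) i := by
          refine Finset.sum_congr rfl fun k _ => ?_
          rw [ctCanonical_ctmul]
      _ = 0 := hx'
  have hdies : ∀ i, Dies R mv ↥(Nfam i) (fun k => q k i) ⊤ := fun i =>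
    (diesTop_iff_sum_ctmul_eq_zero _).mpr (hxi i)
  obtain ⟨A, hcg, hmA, hgood⟩ := exists_good h mv
  obtain ⟨sdb, hsdb⟩ := (h A hcg).out
  have hAi : ∀ i, ∑ k, ctmul R ↥(Nfam i) ↥A (q k i) ⟨mv k, hmA k⟩ = 0 := fun i =>
    (dies_iff_sum_ctmul_eq_zero _ _ hmA).mp (hgood ↥(Nfam i) (fun k => q k i) (hdies i))
  have hfunc : ∀ (i : ι) (f : ↥A →ₗ[R] R), ∑ k, op (f ⟨mv k, hmA k⟩) • (q k i) = 0 :=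
    fun i f => sum_op_smul_eq_zero_of_ctzero mv A hmA ↥(Nfam i) (fun k => q k i) (hAi i) f
  -- the sum dies in the product tensored with A
  have hQA : ∑ k, ctmul R (∀ i, ↥(Nfam i)) ↥A (q k) ⟨mv k, hmA k⟩ = 0 := by
    rw [dual_sum mv A hmA sdb hsdb]
    refine Finset.sum_eq_zero fun y _ => ?_
    have hz : (∑ k, op ((sdb ⟨mv k, hmA k⟩) y) • q k) = (0 : ∀ i, ↥(Nfam i)) := by
      funext i
      rw [Finset.sum_apply]
      have h4 : ∀ k, (op ((sdb ⟨mv k, hmA k⟩) y) • q k) i =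
          op ((((Finsupp.lapply y).comp sdb) ⟨mv k, hmA k⟩ : R)) • (q k i) := fun k => rfl
      rw [Finset.sum_congr rfl fun k _ => h4 k]
      exact hfunc i ((Finsupp.lapply y).comp sdb)
    rw [hz, ctmul_zero_left]
  have hfin : ∑ k, ctmul R (∀ i, ↥(Nfam i)) M (q k) (mv k) =
      ctmapRight R (∀ i, ↥(Nfam i)) A.subtype
        (∑ k, ctmul R (∀ i, ↥(Nfam i)) ↥A (q k) ⟨mv k, hmA k⟩) := by
    rw [map_sum]
    refine Finset.sum_congr rfl fun k _ => ?_
    rw [ctmapRight_ctmul]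
    rfl
  rw [hfin, hQA, map_zero]
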